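/- Let Q be a routing matrix with Q_{ii} > 0 for all i, and assume P_{ij} > 0 for all i,j. Then the system of equations: λ_i P_{ij} ā_i = μ_{ij} f̄_{ij} for all i,j; μ_{ij} ē_{ij} = Q_{ij} Σ_k μ_{ki} f̄_{ki} for all i ≠ j; λ_i ā_i = Σ_{k≠i} μ_{ki} ē_{ki} + Q_{ii} Σ_k μ_{ki} f̄_{ki} for all i; (1 − ā_i) ē_{ii} = 0 for all i; (ē, f̄) ∈ 𝒯; and ā ∈ [0,1]^r, has at least one solution (ē, f̄, ā). -/

import Mathlib

open Finset Filter Topology MeasureTheory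

abbrev Mat (r : ℕ) := Fin r → Fin r → ℝ

/-- The network primitives: per-car arrival rates `lam`, travel rates `mu`,
and the row-stochastic destination matrix `P`. -/
structure NetParams (r : ℕ) where
  lam : Fin r → ℝ
  mu : Mat r
  P : Mat r
  lam_pos : ∀ i, 0 < lam i
  mu_pos : ∀ i j, 0 < mu i j
  P_nonneg : ∀ i j, 0 ≤ P i j
  P_rowsum : ∀ i, ∑ j, P i j = 1

/-- `q` is a routing matrix: nonnegative entries with rows summing to one. -/
def IsRouting {r : ℕ} (q : Mat r) : Prop :=
  (∀ i j, 0 ≤ q i j) ∧ ∀ i, ∑ j, q i j = 1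

/-- `(e, f)` belongs to the set 𝒯. -/
def MemT {r : ℕ} (e f : Mat r) : Prop :=
  (∀ i j, e i j ∈ Set.Icc (0:ℝ) 1) ∧ (∀ i j, f i j ∈ Set.Icc (0:ℝ) 1) ∧
    (∑ i, ∑ j, (e i j + f i j)) = 1

/-- The equilibrium system of equations (16a)–(16e) associated with the routing
matrix `Q`. -/
def EqSys {r : ℕ} (np : NetParams r) (Q ebar fbar : Mat r)
    (abar : Fin r → ℝ) : Prop :=
  (∀ i j, np.lam i * np.P i j * abar i = np.mu i j * fbar i j) ∧
  (∀ i j, i ≠ j → np.mu i j * ebar i j = Q i j * ∑ k, np.mu k i * fbar k i) ∧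
  (∀ i, np.lam i * abar i =
    (∑ k ∈ Finset.univ.filter (fun k => k ≠ i), np.mu k i * ebar k i)
      + Q i i * ∑ k, np.mu k i * fbar k i) ∧
  (∀ i, (1 - abar i) * ebar i i = 0) ∧
  MemT ebar fbar ∧
  (∀ i, 0 ≤ abar i ∧ abar i ≤ 1)

lemma exists_stationary {r : ℕ} (hr : 1 ≤ r) (M : Mat r)
    (h0 : ∀ i j, 0 ≤ M i j) (h1 : ∀ i, ∑ j, M i j = 1) :
    ∃ b : Fin r → ℝ, (∀ i, 0 ≤ b i) ∧ (∑ i, b i = 1) ∧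
      ∀ i, b i = ∑ k, M k i * b k := by
  have hr0 : (0:ℝ) < r := by exact_mod_cast hr
  set T : (Fin r → ℝ) → (Fin r → ℝ) := fun x i => ∑ k, M k i * x k with hT
  set D : Set (Fin r → ℝ) := {x | (∀ i, 0 ≤ x i) ∧ ∑ i, x i = 1} with hD
  have hTD : ∀ x ∈ D, T x ∈ D := by
    rintro x ⟨hx0, hx1⟩
    constructor
    · intro i; exact Finset.sum_nonneg fun k _ => mul_nonneg (h0 k i) (hx0 k)
    · rw [show ∑ i, T x i = ∑ k, (∑ i, M k i) * x k by
        rw [Finset.sum_comm]; simp [Finset.sum_mul, hT]]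
      simp [h1, hx1]
  set x0 : Fin r → ℝ := fun _ => (r:ℝ)⁻¹ with hx0def
  have hx0D : x0 ∈ D := by
    constructor
    · intro i; positivity
    · simp only [hx0def, Finset.sum_const, Finset.card_univ, Fintype.card_fin, nsmul_eq_mul]
      field_simp
  have hiterD : ∀ n, T^[n] x0 ∈ D := by
    intro n; induction n with
    | zero => simpa using hx0D
    | succ n ih => rw [Function.iterate_succ_apply']; exact hTD _ ih
  set v : ℕ → Fin r → ℝ := fun n i => ((n:ℝ)+1)⁻¹ * ∑ k ∈ Finset.range (n+1), T^[k] x0 i with hv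
  have hvD : ∀ n, v n ∈ D := by
    intro n
    constructor
    · intro i
      apply mul_nonneg (by positivity)
      exact Finset.sum_nonneg fun k _ => (hiterD k).1 i
    · have : ∑ i, v n i = ((n:ℝ)+1)⁻¹ * ∑ k ∈ Finset.range (n+1), ∑ i, T^[k] x0 i := by
        rw [← Finset.mul_sum, Finset.sum_comm]
      rw [this]
      have : ∀ k ∈ Finset.range (n+1), ∑ i, T^[k] x0 i = 1 := fun k _ => (hiterD k).2
      rw [Finset.sum_congr rfl this]
      simp
      field_simp
  -- D is compact
  have hDsub : D ⊆ Set.pi Set.univ (fun _ : Fin r => Set.Icc (0:ℝ) 1) := by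
    rintro x ⟨hx0, hx1⟩ i _
    refine ⟨hx0 i, ?_⟩
    calc x i ≤ ∑ j, x j := Finset.single_le_sum (fun j _ => hx0 j) (Finset.mem_univ i)
    _ = 1 := hx1
  have hDclosed : IsClosed D := by
    have h1c : IsClosed {x : Fin r → ℝ | ∀ i, 0 ≤ x i} := by
      have : {x : Fin r → ℝ | ∀ i, 0 ≤ x i} = ⋂ i, {x | 0 ≤ x i} := by
        ext x; simp
      rw [this]
      exact isClosed_iInter fun i => isClosed_le continuous_const (continuous_apply i)
    have h2c : IsClosed {x : Fin r → ℝ | ∑ i, x i = 1} :=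
      isClosed_eq (by continuity) continuous_const
    exact h1c.inter h2c
  have hDcomp : IsCompact D :=
    (isCompact_univ_pi fun _ => isCompact_Icc).of_isClosed_subset hDclosed hDsub
  obtain ⟨b, hbD, φ, hφ, hconv⟩ := hDcomp.tendsto_subseq (fun n => hvD n)
  have hvb : ∀ i, Tendsto (fun n => v (φ n) i) atTop (𝓝 (b i)) := by
    intro i
    exact (tendsto_pi_nhds.mp hconv i)
  -- key identity
  have hkey : ∀ n i, T (v n) i - v n i = ((n:ℝ)+1)⁻¹ * (T^[n+1] x0 i - x0 i) := by
    intro n i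
    have hTv : T (v n) i = ((n:ℝ)+1)⁻¹ * ∑ k ∈ Finset.range (n+1), T^[k+1] x0 i := by
      have e1 : ∀ k, (T^[k+1] x0) i = ∑ x, M x i * T^[k] x0 x := fun k => by
        rw [Function.iterate_succ_apply']
      simp only [hv, e1, Finset.mul_sum, hT]
      rw [Finset.sum_comm]
      exact Finset.sum_congr rfl fun k _ => by
        simp only [Function.iterate_succ_apply', Finset.mul_sum]
        exact Finset.sum_congr rfl fun x _ => by ring
    rw [hTv, hv]
    rw [← mul_sub, ← Finset.sum_sub_distrib]
    congr 1
    have := Finset.sum_range_sub (fun k => T^[k] x0 i) (n+1)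
    simpa using this
  have hdiff0 : ∀ i, Tendsto (fun n => T (v n) i - v n i) atTop (𝓝 0) := by
    intro i
    have hbnd : Tendsto (fun n : ℕ => 2 * ((n:ℝ)+1)⁻¹) atTop (𝓝 0) := by
      have : Tendsto (fun n : ℕ => ((n:ℝ)+1)⁻¹) atTop (𝓝 0) := by
        simpa only [one_div] using tendsto_one_div_add_atTop_nhds_zero_nat (𝕜 := ℝ)
      simpa using this.const_mul 2
    refine squeeze_zero_norm ?_ hbnd
    · intro n
      rw [hkey n i, Real.norm_eq_abs, abs_mul,
        abs_of_nonneg (by positivity : (0:ℝ) ≤ ((n:ℝ)+1)⁻¹)]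
      have h1 := (hiterD (n+1)).1 i
      have h2 : T^[n+1] x0 i ≤ 1 := by
        calc T^[n+1] x0 i ≤ ∑ j, T^[n+1] x0 j :=
          Finset.single_le_sum (fun j _ => (hiterD (n+1)).1 j) (Finset.mem_univ i)
        _ = 1 := (hiterD (n+1)).2
      have h3 := hx0D.1 i
      have h4 : x0 i ≤ 1 := by
        calc x0 i ≤ ∑ j, x0 j :=
          Finset.single_le_sum (fun j _ => hx0D.1 j) (Finset.mem_univ i)
        _ = 1 := hx0D.2
      have habs : |T^[n+1] x0 i - x0 i| ≤ 2 := by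
        rw [abs_sub_le_iff]; constructor <;> linarith
      have hpos : (0:ℝ) ≤ ((n:ℝ)+1)⁻¹ := by positivity
      nlinarith [mul_le_mul_of_nonneg_left habs hpos]
  refine ⟨b, hbD.1, hbD.2, fun i => ?_⟩
  have hTvb : Tendsto (fun n => T (v (φ n)) i) atTop (𝓝 (T b i)) := by
    simp only [hT]
    exact tendsto_finset_sum _ fun k _ => (hvb k).const_mul (M k i)
  have hsub : Tendsto (fun n => T (v (φ n)) i - v (φ n) i) atTop (𝓝 (T b i - b i)) :=
    hTvb.sub (hvb i)
  have hzero : Tendsto (fun n => T (v (φ n)) i - v (φ n) i) atTop (𝓝 0) :=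
    (hdiff0 i).comp hφ.tendsto_atTop
  have := tendsto_nhds_unique hsub hzero
  have hb : T b i = b i := by linarith
  rw [← hb]

/-- Lemma 3 (existence part): if `P_{ij} > 0` for all `i,j` and `Q` is a routing
matrix with `Q_{ii} > 0` for all `i`, then the equilibrium system has at least
one solution. -/
theorem stmt_7 {r : ℕ} (hr : 1 ≤ r) (np : NetParams r)
    (hP : ∀ i j, 0 < np.P i j)
    (Q : Mat r) (hQ : IsRouting Q) (hQd : ∀ i, 0 < Q i i) :
    ∃ (ebar fbar : Mat r) (abar : Fin r → ℝ), EqSys np Q ebar fbar abar := by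
  obtain ⟨hQ0, hQ1⟩ := hQ
  set M : Mat r := fun i j => ∑ k, np.P i k * Q k j with hM
  have hM0 : ∀ i j, 0 ≤ M i j := fun i j =>
    Finset.sum_nonneg fun k _ => mul_nonneg (np.P_nonneg i k) (hQ0 k j)
  have hM1 : ∀ i, ∑ j, M i j = 1 := by
    intro i
    have : ∑ j, M i j = ∑ k, np.P i k * ∑ j, Q k j := by
      simp only [hM, Finset.mul_sum]
      rw [Finset.sum_comm]
    rw [this]
    simp only [hQ1, mul_one]
    exact np.P_rowsum i
  obtain ⟨b, hb0, hb1, hbfix⟩ := exists_stationary hr M hM0 hM1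
  set s : Fin r → ℝ := fun i => ∑ k, b k * np.P k i with hs
  have hs0 : ∀ i, 0 ≤ s i := fun i =>
    Finset.sum_nonneg fun k _ => mul_nonneg (hb0 k) (np.P_nonneg k i)
  have hkey : ∀ i, ∑ k, Q k i * s k = b i := by
    intro i
    have h : ∑ k, Q k i * s k = ∑ m, M m i * b m := by
      simp only [hs, hM, Finset.mul_sum, Finset.sum_mul]
      rw [Finset.sum_comm]
      exact Finset.sum_congr rfl fun m _ => Finset.sum_congr rfl fun k _ => by ring
    rw [h, ← hbfix i]
  have hbex : ∃ i, 0 < b i := by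
    by_contra h
    push_neg at h
    have : ∑ i, b i = 0 :=
      Finset.sum_eq_zero fun i _ => le_antisymm (h i) (hb0 i)
    rw [hb1] at this
    norm_num at this
  obtain ⟨iw, hbiw⟩ := hbex
  set C : ℝ := ∑ i, ∑ j, ((if i = j then 0 else Q i j * s i / np.mu i j)
    + b i * np.P i j / np.mu i j) with hC
  have hterm_nonneg : ∀ i j, 0 ≤ (if i = j then 0 else Q i j * s i / np.mu i j)
      + b i * np.P i j / np.mu i j := by
    intro i j
    have h1 : 0 ≤ (if i = j then (0:ℝ) else Q i j * s i / np.mu i j) := by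
      split
      · exact le_refl _
      · exact div_nonneg (mul_nonneg (hQ0 i j) (hs0 i)) (np.mu_pos i j).le
    have h2 : 0 ≤ b i * np.P i j / np.mu i j :=
      div_nonneg (mul_nonneg (hb0 i) (np.P_nonneg i j)) (np.mu_pos i j).le
    linarith
  have hCpos : 0 < C := by
    refine Finset.sum_pos' (fun i _ => Finset.sum_nonneg fun j _ => hterm_nonneg i j)
      ⟨iw, Finset.mem_univ _, ?_⟩
    refine Finset.sum_pos' (fun j _ => hterm_nonneg iw j) ⟨iw, Finset.mem_univ _, ?_⟩
    have h2 : 0 < b iw * np.P iw iw / np.mu iw iw :=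
      div_pos (mul_pos hbiw (hP _ _)) (np.mu_pos _ _)
    simpa using h2
  set sgt := Finset.univ.filter (fun i => 0 < b i) with hsgt
  have hsgtne : sgt.Nonempty := ⟨iw, by simp [hsgt, hbiw]⟩
  set tstar := sgt.inf' hsgtne (fun i => np.lam i / b i) with htstar
  have htstar_pos : 0 < tstar := by
    rw [htstar, Finset.lt_inf'_iff]
    intro i hi
    exact div_pos (np.lam_pos i) (by simpa [hsgt] using hi)
  obtain ⟨i0, hi0mem, hi0eq⟩ := Finset.exists_mem_eq_inf' hsgtne (fun i => np.lam i / b i)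
  have hbi0 : 0 < b i0 := by simpa [hsgt] using hi0mem
  have htb : ∀ i, tstar * b i ≤ np.lam i := by
    intro i
    rcases eq_or_lt_of_le (hb0 i) with h | h
    · rw [← h, mul_zero]; exact (np.lam_pos i).le
    · have hle : tstar ≤ np.lam i / b i :=
        Finset.inf'_le _ (by simp [hsgt, h])
      calc tstar * b i ≤ (np.lam i / b i) * b i :=
            mul_le_mul_of_nonneg_right hle (hb0 i)
      _ = np.lam i := div_mul_cancel₀ _ (ne_of_gt h)
  set t := min tstar C⁻¹ with ht
  have ht_pos : 0 < t := lt_min htstar_pos (inv_pos.mpr hCpos)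
  have htC : t * C ≤ 1 := by
    have hle : t ≤ C⁻¹ := min_le_right _ _
    calc t * C ≤ C⁻¹ * C := mul_le_mul_of_nonneg_right hle hCpos.le
    _ = 1 := inv_mul_cancel₀ (ne_of_gt hCpos)
  set a : Fin r → ℝ := fun i => t * b i / np.lam i with ha
  set fm : Mat r := fun i j => t * b i * np.P i j / np.mu i j with hfm
  set em : Mat r := fun i j => (if i = j then 0 else t * Q i j * s i / np.mu i j)
    + (if i = i0 ∧ j = i0 then 1 - t * C else 0) with hem
  have hSf : ∀ i, ∑ k, np.mu k i * fm k i = t * s i := by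
    intro i
    simp only [hs, hfm, Finset.mul_sum]
    refine Finset.sum_congr rfl fun k _ => ?_
    have hmu := (np.mu_pos k i).ne'
    field_simp
  have hfnn : ∀ i j, 0 ≤ fm i j := fun i j =>
    div_nonneg (mul_nonneg (mul_nonneg ht_pos.le (hb0 i)) (np.P_nonneg i j)) (np.mu_pos i j).le
  have henn : ∀ i j, 0 ≤ em i j := by
    intro i j
    simp only [hem]
    have h1 : 0 ≤ (if i = j then (0:ℝ) else t * Q i j * s i / np.mu i j) := by
      split
      · exact le_refl _
      · exact div_nonneg (mul_nonneg (mul_nonneg ht_pos.le (hQ0 i j)) (hs0 i)) (np.mu_pos i j).le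
    have h2 : 0 ≤ (if i = i0 ∧ j = i0 then 1 - t * C else (0:ℝ)) := by
      split
      · linarith
      · exact le_refl _
    linarith
  have hsum : ∑ i, ∑ j, (em i j + fm i j) = 1 := by
    have hsplit : ∀ i j, em i j + fm i j =
        ((if i = j then 0 else t * Q i j * s i / np.mu i j) + t * b i * np.P i j / np.mu i j)
          + (if i = i0 ∧ j = i0 then 1 - t * C else 0) := by
      intro i j; simp only [hem, hfm]; ring
    have h1 : ∑ i, ∑ j, ((if i = j then 0 else t * Q i j * s i / np.mu i j)
        + t * b i * np.P i j / np.mu i j) = t * C := by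
      rw [hC, Finset.mul_sum]
      refine Finset.sum_congr rfl fun i _ => ?_
      rw [Finset.mul_sum]
      refine Finset.sum_congr rfl fun j _ => ?_
      rw [mul_add, mul_ite, mul_zero]
      congr 1
      · split
        · rfl
        · ring
      · ring
    have h2 : ∑ i, ∑ j, (if i = i0 ∧ j = i0 then 1 - t * C else (0:ℝ)) = 1 - t * C := by
      simp [ite_and, Finset.sum_ite_eq]
    calc ∑ i, ∑ j, (em i j + fm i j)
        = ∑ i, ∑ j, (((if i = j then 0 else t * Q i j * s i / np.mu i j)
            + t * b i * np.P i j / np.mu i j)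
            + (if i = i0 ∧ j = i0 then 1 - t * C else 0)) := by
          exact Finset.sum_congr rfl fun i _ => Finset.sum_congr rfl fun j _ => hsplit i j
      _ = ∑ i, ((∑ j, ((if i = j then 0 else t * Q i j * s i / np.mu i j)
            + t * b i * np.P i j / np.mu i j))
            + ∑ j, (if i = i0 ∧ j = i0 then 1 - t * C else 0)) :=
          Finset.sum_congr rfl fun i _ => Finset.sum_add_distrib
      _ = (∑ i, ∑ j, ((if i = j then 0 else t * Q i j * s i / np.mu i j)
            + t * b i * np.P i j / np.mu i j))
            + ∑ i, ∑ j, (if i = i0 ∧ j = i0 then 1 - t * C else 0) :=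
          Finset.sum_add_distrib
      _ = t * C + (1 - t * C) := by rw [h1, h2]
      _ = 1 := by ring
  have hentry : ∀ i j, em i j + fm i j ≤ 1 := by
    intro i j
    rw [← hsum]
    calc em i j + fm i j ≤ ∑ j', (em i j' + fm i j') :=
        Finset.single_le_sum (fun j' _ => add_nonneg (henn i j') (hfnn i j')) (Finset.mem_univ j)
    _ ≤ ∑ i', ∑ j', (em i' j' + fm i' j') :=
        Finset.single_le_sum
          (fun i' _ => Finset.sum_nonneg fun j' _ => add_nonneg (henn i' j') (hfnn i' j'))
          (Finset.mem_univ i)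
  have hterm2 : ∀ i j, i ≠ j → np.mu i j * em i j = t * (Q i j * s i) := by
    intro i j hij
    have hmu := (np.mu_pos i j).ne'
    simp only [hem]
    rw [if_neg hij, if_neg (by rintro ⟨h1, h2⟩; exact hij (h1.trans h2.symm)), add_zero]
    field_simp
  refine ⟨em, fm, a, ?_, ?_, ?_, ?_, ⟨?_, ?_, hsum⟩, ?_⟩
  · -- (16a)
    intro i j
    have hl := (np.lam_pos i).ne'
    have hmu := (np.mu_pos i j).ne'
    simp only [ha, hfm]
    field_simp
    try ring
  · -- (16b)
    intro i j hij
    rw [hSf, hterm2 i j hij]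
    ring
  · -- (16c)
    intro i
    have hl := (np.lam_pos i).ne'
    have hla : np.lam i * a i = t * b i := by
      simp only [ha]; field_simp; try ring
    have hAll : ∑ k, t * (Q k i * s k) = t * b i := by
      rw [← Finset.mul_sum, hkey]
    calc np.lam i * a i = t * b i := hla
    _ = ∑ k, t * (Q k i * s k) := hAll.symm
    _ = (∑ k ∈ Finset.univ.erase i, t * (Q k i * s k)) + t * (Q i i * s i) :=
        (Finset.sum_erase_add _ _ (Finset.mem_univ i)).symm
    _ = (∑ k ∈ Finset.univ.filter (fun k => k ≠ i), np.mu k i * em k i)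
        + Q i i * ∑ k, np.mu k i * fm k i := by
      rw [hSf, Finset.filter_ne']
      congr 1
      · exact Finset.sum_congr rfl fun k hk =>
          (hterm2 k i (Finset.ne_of_mem_erase hk)).symm
      · ring
  · -- (16d)
    intro i
    by_cases hii : i = i0
    · have hemii : em i i = 1 - t * C := by simp [hem, hii]
      by_cases hz : 1 - t * C = 0
      · rw [hemii, hz, mul_zero]
      · have htt : t = tstar := by
          rcases min_choice tstar C⁻¹ with h | h
          · rw [ht, h]
          · exfalso
            apply hz
            have h1 : t * C = 1 := by
              rw [ht, h]
              exact inv_mul_cancel₀ (ne_of_gt hCpos)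
            linarith
        have hts : tstar = np.lam i0 / b i0 := htstar.trans hi0eq
        have hb0' := hbi0.ne'
        have hl0' := (np.lam_pos i0).ne'
        have ha1 : a i = 1 := by
          simp only [ha]
          rw [hii, htt, hts]
          field_simp
        rw [ha1, hemii]
        ring
    · have hemii : em i i = 0 := by simp [hem, hii]
      rw [hemii, mul_zero]
  · -- ebar in [0,1]
    intro i j
    exact ⟨henn i j, by have := hentry i j; have := hfnn i j; linarith⟩
  · -- fbar in [0,1]
    intro i j
    exact ⟨hfnn i j, by have := hentry i j; have := henn i j; linarith⟩
  · -- abar in [0,1]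
    intro i
    constructor
    · exact div_nonneg (mul_nonneg ht_pos.le (hb0 i)) (np.lam_pos i).le
    · have h1 : t * b i ≤ tstar * b i :=
        mul_le_mul_of_nonneg_right (min_le_left _ _) (hb0 i)
      have h2 : t * b i ≤ np.lam i := le_trans h1 (htb i)
      exact (div_le_one (np.lam_pos i)).mpr h2
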